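/- LP duality for AV@R: for α ∈ (0,1], X ∈ ℝ^n, and probability vector π with positive entries, max{ μᵀX : Σμ_i = 1, 0 ≤ αμ ≤ π } = min{ t + α^{-1} Σ_i π_i max(X_i − t, 0) : t ∈ ℝ } (the Rockafellar–Uryasev representation). -/

import Mathlib

/-- Rockafellar–Uryasev / LP duality for AV@R:
max{μᵀX : Σμ = 1, 0 ≤ αμ ≤ π} = min{t + α⁻¹ Σ π_i max(X_i − t, 0) : t ∈ ℝ}. -/
theorem avar_lp_duality (n : ℕ) (π X : Fin n → ℝ)
    (hπ : ∀ i, 0 < π i) (hπsum : ∑ i, π i = 1)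
    (α : ℝ) (hα : 0 < α) (hα1 : α ≤ 1) :
    sSup {v : ℝ | ∃ μ : Fin n → ℝ, (∑ i, μ i = 1) ∧
        (∀ i, 0 ≤ α * μ i ∧ α * μ i ≤ π i) ∧ v = ∑ i, μ i * X i}
    = sInf {v : ℝ | ∃ t : ℝ, v = t + α⁻¹ * ∑ i, π i * max (X i - t) 0} := by
  classical
  have hnn : (Finset.univ : Finset (Fin n)).Nonempty := by
    rcases (Finset.univ : Finset (Fin n)).eq_empty_or_nonempty with h | h
    · rw [h, Finset.sum_empty] at hπsum; norm_num at hπsum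
    · exact h
  -- weak duality
  have weak : ∀ (μ : Fin n → ℝ), (∑ i, μ i = 1) → (∀ i, 0 ≤ α * μ i ∧ α * μ i ≤ π i) →
      ∀ s : ℝ, ∑ i, μ i * X i ≤ s + α⁻¹ * ∑ i, π i * max (X i - s) 0 := by
    intro μ hsum hcon s
    have key : ∀ i : Fin n, μ i * X i ≤ μ i * s + α⁻¹ * (π i * max (X i - s) 0) := by
      intro i
      have hμ0 : 0 ≤ μ i := by nlinarith [(hcon i).1]
      have hμle : μ i ≤ α⁻¹ * π i := by
        rw [inv_mul_eq_div, le_div_iff₀ hα]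
        have := (hcon i).2
        nlinarith
      have h1 : μ i * (X i - s) ≤ μ i * max (X i - s) 0 :=
        mul_le_mul_of_nonneg_left (le_max_left _ _) hμ0
      have h2 : μ i * max (X i - s) 0 ≤ α⁻¹ * π i * max (X i - s) 0 :=
        mul_le_mul_of_nonneg_right hμle (le_max_right _ _)
      nlinarith
    calc ∑ i, μ i * X i ≤ ∑ i, (μ i * s + α⁻¹ * (π i * max (X i - s) 0)) :=
          Finset.sum_le_sum fun i _ => key i
      _ = s + α⁻¹ * ∑ i, π i * max (X i - s) 0 := by
          rw [Finset.sum_add_distrib, ← Finset.sum_mul, hsum, ← Finset.mul_sum]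
          ring
  -- tail function
  set G : ℝ → ℝ := fun s => ∑ j ∈ Finset.univ.filter (fun j => s < X j), π j with hGdef
  obtain ⟨imax, -, hmax⟩ := Finset.exists_max_image Finset.univ X hnn
  have hGmax : G (X imax) = 0 := by
    have hemp : Finset.univ.filter (fun j => X imax < X j) = ∅ := by
      ext j
      simp only [Finset.mem_filter, Finset.mem_univ, true_and, Finset.notMem_empty, iff_false]
      exact not_lt.mpr (hmax j (Finset.mem_univ j))
    simp [hGdef, hemp]
  have hCne : (Finset.univ.filter (fun i => G (X i) ≤ α)).Nonempty :=
    ⟨imax, by simp [hGmax, le_of_lt hα]⟩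
  obtain ⟨i0, hi0, hmin⟩ := Finset.exists_min_image _ X hCne
  set t : ℝ := X i0 with htdef
  have hP : G t ≤ α := (Finset.mem_filter.mp hi0).2
  set GTs := Finset.univ.filter (fun j => t < X j) with hGTs
  set Es := Finset.univ.filter (fun j => X j = t) with hEs
  set Hs := Finset.univ.filter (fun j => t ≤ X j) with hHs
  set P : ℝ := ∑ j ∈ GTs, π j with hPdef
  set Q : ℝ := ∑ j ∈ Es, π j with hQdef
  have hGt : G t = P := rfl
  have hPα : P ≤ α := hP
  -- split Hs
  have hsplit : P + Q = ∑ j ∈ Hs, π j := by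
    have h1 : Hs.filter (fun j => t < X j) = GTs := by
      ext j
      simp only [hHs, hGTs, Finset.mem_filter, Finset.mem_univ, true_and]
      exact ⟨fun h => h.2, fun h => ⟨le_of_lt h, h⟩⟩
    have h2 : Hs.filter (fun j => ¬ t < X j) = Es := by
      ext j
      simp only [hHs, hEs, Finset.mem_filter, Finset.mem_univ, true_and, not_lt]
      constructor
      · rintro ⟨h1, h2⟩; exact le_antisymm h2 h1
      · rintro h; exact ⟨le_of_eq h.symm, le_of_eq h⟩
    rw [hPdef, hQdef, ← h1, ← h2, Finset.sum_filter_add_sum_filter_not]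
  have hαH : α ≤ ∑ j ∈ Hs, π j := by
    rcases (Finset.univ.filter (fun j => X j < t)).eq_empty_or_nonempty with hD | hD
    · have hHu : Hs = Finset.univ := by
        ext j
        simp only [hHs, Finset.mem_filter, Finset.mem_univ, true_and, iff_true]
        by_contra h
        have : j ∈ Finset.univ.filter (fun j => X j < t) :=
          Finset.mem_filter.mpr ⟨Finset.mem_univ j, not_le.mp h⟩
        rw [hD] at this; exact absurd this (Finset.notMem_empty j)
      rw [hHu, hπsum]; exact hα1
    · obtain ⟨k, hkD, hk⟩ := Finset.exists_max_image _ X hD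
      have hkt : X k < t := (Finset.mem_filter.mp hkD).2
      have hkG : G (X k) = ∑ j ∈ Hs, π j := by
        apply Finset.sum_congr _ (fun _ _ => rfl)
        ext j
        simp only [hHs, Finset.mem_filter, Finset.mem_univ, true_and]
        constructor
        · intro h
          by_contra h'
          exact absurd (hk j (Finset.mem_filter.mpr ⟨Finset.mem_univ j, not_le.mp h'⟩))
            (not_le.mpr h)
        · intro h; exact lt_of_lt_of_le hkt h
      have hkC : ¬ G (X k) ≤ α := by
        intro hle
        exact absurd (hmin k (Finset.mem_filter.mpr ⟨Finset.mem_univ k, hle⟩))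
          (not_le.mpr hkt)
      rw [hkG] at hkC
      linarith [not_le.mp hkC]
  have hQpos : 0 < Q :=
    Finset.sum_pos (fun j _ => hπ j)
      ⟨i0, Finset.mem_filter.mpr ⟨Finset.mem_univ i0, rfl⟩⟩
  have hαPQ : α - P ≤ Q := by linarith [hsplit, hαH]
  -- optimal μ
  set c : ℝ := (α - P) / (α * Q) with hcdef
  set μ : Fin n → ℝ := fun j =>
    (if t < X j then π j / α else 0) + (if X j = t then π j * c else 0) with hμdef
  set vstar : ℝ := α⁻¹ * ((∑ j ∈ GTs, π j * X j) + t * (α - P)) with hvdef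
  have hsum1 : ∑ i, μ i = 1 := by
    have : ∑ i, μ i = (∑ j ∈ GTs, π j / α) + ∑ j ∈ Es, π j * c := by
      rw [hμdef, Finset.sum_add_distrib, hGTs, hEs, Finset.sum_filter, Finset.sum_filter]
    rw [this, ← Finset.sum_div, ← Finset.sum_mul, ← hPdef, ← hQdef, hcdef]
    field_simp
    ring
  have hcon : ∀ i, 0 ≤ α * μ i ∧ α * μ i ≤ π i := by
    intro i
    by_cases h1 : t < X i
    · have h2 : ¬ X i = t := ne_of_gt h1
      have : μ i = π i / α := by simp [hμdef, h1, h2]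
      rw [this]
      have heq : α * (π i / α) = π i := by field_simp
      rw [heq]
      exact ⟨le_of_lt (hπ i), le_refl _⟩
    · by_cases h2 : X i = t
      · have : μ i = π i * c := by simp [hμdef, h1, h2]
        rw [this, hcdef]
        have hπi := hπ i
        have hαne : α ≠ 0 := ne_of_gt hα
        have hQne : Q ≠ 0 := ne_of_gt hQpos
        have hnum : 0 ≤ α - P := by linarith
        have hd : 0 ≤ (α - P) / (α * Q) := by positivity
        constructor
        · exact mul_nonneg (le_of_lt hα) (mul_nonneg (le_of_lt hπi) hd)
        · have heq : α * (π i * ((α - P) / (α * Q))) = π i * (α - P) / Q := by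
            field_simp
          rw [heq, div_le_iff₀ hQpos]
          nlinarith
      · have : μ i = 0 := by simp [hμdef, h1, h2]
        rw [this, mul_zero]
        exact ⟨le_refl 0, le_of_lt (hπ i)⟩
  have hμX : ∑ i, μ i * X i = vstar := by
    have h1 : ∑ i, μ i * X i
        = (∑ j ∈ GTs, π j / α * X j) + ∑ j ∈ Es, π j * c * X j := by
      rw [hμdef]
      simp only [add_mul, ite_mul, zero_mul]
      rw [Finset.sum_add_distrib, hGTs, hEs, Finset.sum_filter, Finset.sum_filter]
    have h2 : ∑ j ∈ Es, π j * c * X j = Q * c * t := by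
      rw [hQdef, Finset.sum_mul, Finset.sum_mul]
      apply Finset.sum_congr rfl
      intro j hj
      have : X j = t := (Finset.mem_filter.mp hj).2
      rw [this]
    have h3 : ∑ j ∈ GTs, π j / α * X j = α⁻¹ * ∑ j ∈ GTs, π j * X j := by
      rw [Finset.mul_sum]
      apply Finset.sum_congr rfl
      intro j _
      field_simp
    rw [h1, h2, h3, hvdef, hcdef]
    field_simp
  have hFt : t + α⁻¹ * ∑ i, π i * max (X i - t) 0 = vstar := by
    have h1 : ∑ i, π i * max (X i - t) 0 = ∑ j ∈ GTs, π j * (X j - t) := by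
      rw [← Finset.sum_filter_add_sum_filter_not Finset.univ (fun j => t < X j)
        (fun i => π i * max (X i - t) 0), ← hGTs]
      have hz : ∑ j ∈ Finset.univ.filter (fun j => ¬ t < X j), π j * max (X j - t) 0 = 0 := by
        apply Finset.sum_eq_zero
        intro j hj
        have : ¬ t < X j := (Finset.mem_filter.mp hj).2
        rw [max_eq_right (by linarith [not_lt.mp this]), mul_zero]
      rw [hz, add_zero]
      apply Finset.sum_congr rfl
      intro j hj
      have : t < X j := (Finset.mem_filter.mp hj).2
      rw [max_eq_left (by linarith)]
    have h2 : ∑ j ∈ GTs, π j * (X j - t) = (∑ j ∈ GTs, π j * X j) - t * P := by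
      rw [hPdef, Finset.mul_sum, ← Finset.sum_sub_distrib]
      apply Finset.sum_congr rfl
      intro j _
      ring
    rw [h1, h2, hvdef]
    field_simp
    ring
  -- conclude
  have hvS : vstar ∈ {v : ℝ | ∃ μ : Fin n → ℝ, (∑ i, μ i = 1) ∧
      (∀ i, 0 ≤ α * μ i ∧ α * μ i ≤ π i) ∧ v = ∑ i, μ i * X i} :=
    ⟨μ, hsum1, hcon, hμX.symm⟩
  have hvT : vstar ∈ {v : ℝ | ∃ s : ℝ, v = s + α⁻¹ * ∑ i, π i * max (X i - s) 0} :=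
    ⟨t, hFt.symm⟩
  have hub : ∀ v ∈ {v : ℝ | ∃ μ : Fin n → ℝ, (∑ i, μ i = 1) ∧
      (∀ i, 0 ≤ α * μ i ∧ α * μ i ≤ π i) ∧ v = ∑ i, μ i * X i}, v ≤ vstar := by
    rintro v ⟨μ', h1, h2, rfl⟩
    calc ∑ i, μ' i * X i ≤ t + α⁻¹ * ∑ i, π i * max (X i - t) 0 := weak μ' h1 h2 t
      _ = vstar := hFt
  have hlb : ∀ w ∈ {v : ℝ | ∃ s : ℝ, v = s + α⁻¹ * ∑ i, π i * max (X i - s) 0},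
      vstar ≤ w := by
    rintro w ⟨s, rfl⟩
    calc vstar = ∑ i, μ i * X i := hμX.symm
      _ ≤ s + α⁻¹ * ∑ i, π i * max (X i - s) 0 := weak μ hsum1 hcon s
  have h1 : sSup {v : ℝ | ∃ μ : Fin n → ℝ, (∑ i, μ i = 1) ∧
      (∀ i, 0 ≤ α * μ i ∧ α * μ i ≤ π i) ∧ v = ∑ i, μ i * X i} = vstar :=
    le_antisymm (csSup_le ⟨vstar, hvS⟩ hub) (le_csSup ⟨vstar, hub⟩ hvS)
  have h2 : sInf {v : ℝ | ∃ s : ℝ, v = s + α⁻¹ * ∑ i, π i * max (X i - s) 0} = vstar :=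
    le_antisymm (csInf_le ⟨vstar, hlb⟩ hvT) (le_csInf ⟨vstar, hvT⟩ hlb)
  rw [h1, h2]
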